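/- Let p be a prime and N = pM with p ∤ M. Fix a matrix μ_M = (x y; Mz pw) ∈ SL₂(ℤ) (such a matrix exists since gcd(p,M) = 1), and for γ ∈ Γ₀(N) set β_γ := γ·μ_M ∈ Γ₀(M). Let T := (1 1; 0 1). Then the coset space Γ∞\Γ₀(M) is the disjoint union of the p+1 sets of cosets {Γ∞·γ : γ ∈ Γ₀(N)} and, for each j ∈ {0,1,…,p−1}, {Γ∞·(β_γ·T^j) : γ ∈ Γ₀(N)}. -/

import Mathlib

open Matrix MatrixGroups

local notation "SL2Z" => Matrix.SpecialLinearGroup (Fin 2) ℤ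

/-- `Γ₀(K)` as a set of elements of `SL(2,ℤ)`. -/
def Gamma0' (K : ℤ) : Set SL2Z := { γ | K ∣ γ.1 1 0 }

/-- The translation matrix `T = (1 1; 0 1)`. -/
def Tmat : SL2Z := ⟨!![1, 1; 0, 1], by norm_num [Matrix.det_fin_two_of]⟩

/-- `Γ∞ = {±T^t : t ∈ ℤ}`. -/
def GammaInf : Set SL2Z := { A | ∃ t : ℤ, A = Tmat ^ t ∨ A = -(Tmat ^ t) }

/-- The right coset `Γ∞ · δ`. -/
def cosetOf (δ : SL2Z) : Set SL2Z := { x | ∃ u ∈ GammaInf, x = u * δ }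

/-- The coset space `Γ∞ \ Γ₀(K)`, as a set of cosets. -/
def cosets (K : ℤ) : Set (Set SL2Z) := { C | ∃ δ ∈ Gamma0' K, C = cosetOf δ }

/-- The set of cosets `Γ∞ · (β_γ T^j)`, `γ ∈ Γ₀(pM)`, where `β_γ = γ μ`. -/
def betaTSet (p M : ℕ) (μ : SL2Z) (j : ℕ) : Set (Set SL2Z) :=
  { C | ∃ γ ∈ Gamma0' ((p : ℤ) * M), C = cosetOf (γ * μ * Tmat ^ j) }

lemma mul_entry10 (A B : SL2Z) : (A*B).1 1 0 = A.1 1 0 * B.1 0 0 + A.1 1 1 * B.1 1 0 := by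
  simp [Matrix.SpecialLinearGroup.coe_mul, Matrix.mul_apply, Fin.sum_univ_two]

lemma mul_entry11 (A B : SL2Z) : (A*B).1 1 1 = A.1 1 0 * B.1 0 1 + A.1 1 1 * B.1 1 1 := by
  simp [Matrix.SpecialLinearGroup.coe_mul, Matrix.mul_apply, Fin.sum_univ_two]

lemma Tmat_pow_nat (j : ℕ) : (Tmat ^ j).1 = !![1, (j:ℤ); 0, 1] := by
  induction j with
  | zero => simp [Matrix.SpecialLinearGroup.coe_one]; ext i k; fin_cases i <;> fin_cases k <;> simp
  | succ n ih =>
    rw [pow_succ, Matrix.SpecialLinearGroup.coe_mul, ih, Tmat]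
    ext i k; fin_cases i <;> fin_cases k <;> simp [Matrix.mul_apply, Fin.sum_univ_two] <;> ring

lemma Tmat_zpow_bottom (t : ℤ) : (Tmat ^ t).1 1 0 = 0 ∧ (Tmat ^ t).1 1 1 = 1 := by
  induction t using Int.induction_on with
  | zero => simp
  | succ n ih =>
    rw [_root_.zpow_add_one]
    constructor
    · rw [mul_entry10, ih.1, ih.2]; simp [Tmat]
    · rw [mul_entry11, ih.1, ih.2]; simp [Tmat]
  | pred n ih =>
    rw [sub_eq_add_neg, _root_.zpow_add, _root_.zpow_neg_one]
    have hinv : (Tmat⁻¹).1 = !![1,-1;0,1] := by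
      rw [Matrix.SpecialLinearGroup.SL2_inv_expl]
      simp [Tmat]; rfl
    constructor
    · rw [mul_entry10, ih.1, ih.2, hinv]; simp
    · rw [mul_entry11, ih.1, ih.2, hinv]; simp

lemma one_mem_GammaInf : (1 : SL2Z) ∈ GammaInf := ⟨0, Or.inl (by simp)⟩

lemma bottom_of_GammaInf_mul (u δ : SL2Z) (hu : u ∈ GammaInf) :
    ((u*δ).1 1 0 = δ.1 1 0 ∧ (u*δ).1 1 1 = δ.1 1 1) ∨
    ((u*δ).1 1 0 = -δ.1 1 0 ∧ (u*δ).1 1 1 = -δ.1 1 1) := by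
  obtain ⟨t, h | h⟩ := hu
  · left
    obtain ⟨h0, h1⟩ := Tmat_zpow_bottom t
    constructor
    · rw [mul_entry10, h, h0, h1]; ring
    · rw [mul_entry11, h, h0, h1]; ring
  · right
    obtain ⟨h0, h1⟩ := Tmat_zpow_bottom t
    have h0' : u.1 1 0 = 0 := by rw [h]; simp [h0]
    have h1' : u.1 1 1 = -1 := by rw [h]; simp [h1]
    constructor
    · rw [mul_entry10, h0', h1']; ring
    · rw [mul_entry11, h0', h1']; ring

lemma cosetOf_eq (δ δ' : SL2Z) (h : cosetOf δ = cosetOf δ') : ∃ u ∈ GammaInf, δ = u * δ' := by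
  have : δ ∈ cosetOf δ := ⟨1, one_mem_GammaInf, by simp⟩
  rw [h] at this
  exact this

theorem statement2 (p M : ℕ) (hp : p.Prime) (hM : 0 < M) (hpM : ¬ p ∣ M)
    (μ : SL2Z) (hμ : ∃ x y z w : ℤ, μ.1 = !![x, y; (M : ℤ) * z, (p : ℤ) * w]) :
    (cosets (M : ℤ) =
        { C | ∃ γ ∈ Gamma0' ((p : ℤ) * M), C = cosetOf γ } ∪
          ⋃ j ∈ Finset.range p, betaTSet p M μ j) ∧
    (∀ j : ℕ, j < p →
        { C | ∃ γ ∈ Gamma0' ((p : ℤ) * M), C = cosetOf γ } ∩ betaTSet p M μ j = ∅) ∧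
    (∀ i j : ℕ, i < p → j < p → i ≠ j → betaTSet p M μ i ∩ betaTSet p M μ j = ∅) := by
  haveI : Fact p.Prime := ⟨hp⟩
  obtain ⟨x, y, z, w, hμm⟩ := hμ
  have hμ00 : μ.1 0 0 = x := by rw [hμm]; simp
  have hμ01 : μ.1 0 1 = y := by rw [hμm]; simp
  have hμ10 : μ.1 1 0 = (M:ℤ) * z := by rw [hμm]; simp
  have hμ11 : μ.1 1 1 = (p:ℤ) * w := by rw [hμm]; simp
  have hdet : x * ((p:ℤ)*w) - y * ((M:ℤ)*z) = 1 := by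
    have h2 := μ.2
    rw [Matrix.det_fin_two, hμ00, hμ01, hμ10, hμ11] at h2
    linarith
  have hcop : IsCoprime (p:ℤ) (M:ℤ) :=
    Nat.isCoprime_iff_coprime.mpr ((hp.coprime_iff_not_dvd).2 hpM)
  -- Mz ≠ 0 mod p
  have hMz : ((M:ℕ) : ZMod p) * (z : ZMod p) ≠ 0 := by
    intro h
    have h2 := congrArg (Int.cast : ℤ → ZMod p) hdet
    push_cast at h2
    rw [ZMod.natCast_self, h] at h2
    simp at h2
  -- d invertible mod p for γ ∈ Γ₀(p·)
  have hd_ne : ∀ γ : SL2Z, (p:ℤ) ∣ γ.1 1 0 → ((γ.1 1 1 : ℤ) : ZMod p) ≠ 0 := by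
    intro γ hc hd0
    have hdet' : γ.1 0 0 * γ.1 1 1 - γ.1 0 1 * γ.1 1 0 = 1 := by
      have h2 := γ.2; rw [Matrix.det_fin_two] at h2; linarith
    have hc0 : ((γ.1 1 0 : ℤ) : ZMod p) = 0 := (ZMod.intCast_zmod_eq_zero_iff_dvd _ p).2 hc
    have h2 := congrArg (Int.cast : ℤ → ZMod p) hdet'
    push_cast at h2
    rw [hc0, hd0] at h2
    simp at h2
  -- bottom rows of γ μ T^j
  have hbot : ∀ (γ : SL2Z) (j : ℕ),
      (γ * μ * Tmat ^ j).1 1 0 = γ.1 1 0 * x + γ.1 1 1 * ((M:ℤ)*z) ∧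
      (γ * μ * Tmat ^ j).1 1 1 =
        (γ.1 1 0 * x + γ.1 1 1 * ((M:ℤ)*z)) * j + (γ.1 1 0 * y + γ.1 1 1 * ((p:ℤ)*w)) := by
    intro γ j
    have h1 : (γ * μ).1 1 0 = γ.1 1 0 * x + γ.1 1 1 * ((M:ℤ)*z) := by
      rw [mul_entry10, hμ00, hμ10]
    have h2 : (γ * μ).1 1 1 = γ.1 1 0 * y + γ.1 1 1 * ((p:ℤ)*w) := by
      rw [mul_entry11, hμ01, hμ11]
    have hT := Tmat_pow_nat j
    constructor
    · rw [mul_entry10, hT]; simp [h1]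
    · rw [mul_entry11, hT]; simp [h1, h2]; try ring
  -- mod p values of bottom rows for γ ∈ Γ₀(pM)
  have hbotmod : ∀ (γ : SL2Z), ((p:ℤ)*M ∣ γ.1 1 0) → ∀ j : ℕ,
      (((γ * μ * Tmat ^ j).1 1 0 : ℤ) : ZMod p)
        = ((γ.1 1 1 : ℤ) : ZMod p) * (((M:ℕ) : ZMod p) * (z : ZMod p)) ∧
      (((γ * μ * Tmat ^ j).1 1 1 : ℤ) : ZMod p)
        = ((γ.1 1 1 : ℤ) : ZMod p) * (((M:ℕ) : ZMod p) * (z : ZMod p)) * (j : ZMod p) := by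
    intro γ hγ j
    obtain ⟨h1, h2⟩ := hbot γ j
    have hc0 : ((γ.1 1 0 : ℤ) : ZMod p) = 0 :=
      (ZMod.intCast_zmod_eq_zero_iff_dvd _ p).2 ((dvd_mul_right (p:ℤ) M).trans hγ)
    constructor
    · rw [h1]; push_cast; rw [hc0]; ring
    · rw [h2]; push_cast; rw [hc0, ZMod.natCast_self]; ring
  refine ⟨?_, ?_, ?_⟩
  · -- union
    ext C
    constructor
    · rintro ⟨δ, hδ, rfl⟩
      by_cases hc : (p:ℤ) ∣ δ.1 1 0
      · exact Or.inl ⟨δ, hcop.mul_dvd hc hδ, rfl⟩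
      · right
        have hC : ((δ.1 1 0 : ℤ) : ZMod p) ≠ 0 := by
          intro h; exact hc ((ZMod.intCast_zmod_eq_zero_iff_dvd _ p).1 h)
        set j : ℕ := (((δ.1 1 1 : ℤ) : ZMod p) * ((δ.1 1 0 : ℤ) : ZMod p)⁻¹).val with hjdef
        have hjlt : j < p := ZMod.val_lt _
        have hjval : ((j : ℕ) : ZMod p)
            = ((δ.1 1 1 : ℤ) : ZMod p) * ((δ.1 1 0 : ℤ) : ZMod p)⁻¹ :=
          ZMod.natCast_rightInverse _
        set γ : SL2Z := δ * (μ * Tmat ^ j)⁻¹ with hγdef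
        have hre : γ * μ * Tmat ^ j = δ := by rw [hγdef]; group
        have hMT : (μ * Tmat ^ j).1 = !![x, x*j + y; (M:ℤ)*z, ((M:ℤ)*z)*j + (p:ℤ)*w] := by
          rw [Matrix.SpecialLinearGroup.coe_mul, hμm, Tmat_pow_nat]
          ext i k; fin_cases i <;> fin_cases k <;>
            simp [Matrix.mul_apply, Fin.sum_univ_two]
        have hInv : ((μ * Tmat ^ j)⁻¹).1
            = !![((M:ℤ)*z)*j + (p:ℤ)*w, -(x*j + y); -((M:ℤ)*z), x] := by
          rw [Matrix.SpecialLinearGroup.SL2_inv_expl]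
          ext i k; fin_cases i <;> fin_cases k <;> simp [hMT]
        have hγ10 : γ.1 1 0
            = δ.1 1 0 * (((M:ℤ)*z)*j + (p:ℤ)*w) + δ.1 1 1 * (-((M:ℤ)*z)) := by
          rw [hγdef, mul_entry10, hInv]; simp
        have hpd : (p:ℤ) ∣ γ.1 1 0 := by
          rw [← ZMod.intCast_zmod_eq_zero_iff_dvd]
          rw [hγ10]
          push_cast
          rw [hjval, ZMod.natCast_self]
          have hCC : ((δ.1 1 0 : ℤ) : ZMod p) * ((δ.1 1 0 : ℤ) : ZMod p)⁻¹ = 1 :=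
            mul_inv_cancel₀ hC
          linear_combination ((δ.1 1 1 : ℤ) : ZMod p) * (((M:ℕ):ZMod p) * (z : ZMod p)) * hCC
        have hMd : (M:ℤ) ∣ γ.1 1 0 := by
          rw [hγ10]
          exact dvd_add (hδ.mul_right _) (Dvd.dvd.mul_left (dvd_neg.mpr (dvd_mul_right _ _)) _)
        simp only [Set.mem_iUnion, Finset.mem_range]
        exact ⟨j, hjlt, γ, hcop.mul_dvd hpd hMd, by rw [hre]⟩
    · rintro (⟨γ, hγ, rfl⟩ | hC)
      · have hγ' : ((p:ℤ) * M) ∣ γ.1 1 0 := hγ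
        exact ⟨γ, (dvd_mul_left (M:ℤ) (p:ℤ)).trans hγ', rfl⟩
      · simp only [Set.mem_iUnion, Finset.mem_range] at hC
        obtain ⟨j, hj, γ, hγ, rfl⟩ := hC
        refine ⟨γ * μ * Tmat ^ j, ?_, rfl⟩
        have hγ' : ((p:ℤ) * M) ∣ γ.1 1 0 := hγ
        show (M:ℤ) ∣ (γ * μ * Tmat ^ j).1 1 0
        rw [(hbot γ j).1]
        exact dvd_add (((dvd_mul_left (M:ℤ) (p:ℤ)).trans hγ').mul_right x)
          ((dvd_mul_right (M:ℤ) z).mul_left _)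
  · -- Γ₀(N) cosets disjoint from betaTSet j
    intro j hj
    ext C
    simp only [Set.mem_inter_iff, Set.mem_setOf_eq, Set.mem_empty_iff_false, iff_false]
    rintro ⟨⟨γ, hγ, rfl⟩, ⟨γ', hγ', hC⟩⟩
    obtain ⟨u, hu, hEq⟩ := cosetOf_eq _ _ hC
    have hb := bottom_of_GammaInf_mul u (γ' * μ * Tmat ^ j) hu
    rw [← hEq] at hb
    have h0 : ((γ.1 1 0 : ℤ) : ZMod p) = 0 :=
      (ZMod.intCast_zmod_eq_zero_iff_dvd _ p).2 ((dvd_mul_right (p:ℤ) M).trans hγ)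
    have hm := (hbotmod γ' hγ' j).1
    have hd' := hd_ne γ' ((dvd_mul_right (p:ℤ) M).trans hγ')
    rcases hb with ⟨hb1, _⟩ | ⟨hb1, _⟩
    · have e := congrArg (Int.cast : ℤ → ZMod p) hb1
      rw [h0, hm] at e
      exact (mul_ne_zero hd' hMz) e.symm
    · have e := congrArg (Int.cast : ℤ → ZMod p) hb1
      rw [h0] at e
      push_cast at e
      rw [hm] at e
      exact (mul_ne_zero hd' hMz) (neg_eq_zero.mp e.symm)
  · -- betaTSet i disjoint from betaTSet j
    intro i j hi hj hij
    ext C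
    simp only [Set.mem_inter_iff, Set.mem_setOf_eq, Set.mem_empty_iff_false, iff_false]
    rintro ⟨⟨γ, hγ, rfl⟩, ⟨γ', hγ', hC⟩⟩
    obtain ⟨u, hu, hEq⟩ := cosetOf_eq _ _ hC
    have hb := bottom_of_GammaInf_mul u (γ' * μ * Tmat ^ j) hu
    rw [← hEq] at hb
    obtain ⟨hm0, hm1⟩ := hbotmod γ hγ i
    obtain ⟨hm0', hm1'⟩ := hbotmod γ' hγ' j
    have hd := hd_ne γ ((dvd_mul_right (p:ℤ) M).trans hγ)
    have hd' := hd_ne γ' ((dvd_mul_right (p:ℤ) M).trans hγ')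
    have key : (i : ZMod p) = (j : ZMod p) := by
      rcases hb with ⟨hb0, hb1⟩ | ⟨hb0, hb1⟩
      · have e0 := congrArg (Int.cast : ℤ → ZMod p) hb0
        have e1 := congrArg (Int.cast : ℤ → ZMod p) hb1
        rw [hm0, hm0'] at e0
        rw [hm1, hm1'] at e1
        rw [e0] at e1
        exact mul_left_cancel₀ (mul_ne_zero hd' hMz) e1
      · have e0 := congrArg (Int.cast : ℤ → ZMod p) hb0
        have e1 := congrArg (Int.cast : ℤ → ZMod p) hb1
        push_cast at e0 e1
        rw [hm0, hm0'] at e0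
        rw [hm1, hm1'] at e1
        have hne : -(((γ'.1 1 1 : ℤ) : ZMod p) * (((M:ℕ):ZMod p) * (z : ZMod p))) ≠ 0 :=
          neg_ne_zero.mpr (mul_ne_zero hd' hMz)
        apply mul_left_cancel₀ hne
        calc -(((γ'.1 1 1 : ℤ) : ZMod p) * (((M:ℕ):ZMod p) * (z : ZMod p))) * (i : ZMod p)
            = ((γ.1 1 1 : ℤ) : ZMod p) * (((M:ℕ):ZMod p) * (z : ZMod p)) * (i : ZMod p) := by
              rw [← e0]; try ring
          _ = -(((γ'.1 1 1 : ℤ) : ZMod p) * (((M:ℕ):ZMod p) * (z : ZMod p))) * (j : ZMod p) := by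
              rw [e1]; try ring
    have : i = j := by
      have := congrArg ZMod.val key
      rwa [ZMod.val_cast_of_lt hi, ZMod.val_cast_of_lt hj] at this
    exact hij this
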